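/- arXiv:1804.03460 — 7 statements merged into one kernel-verified Lean document; each statement's English description precedes it below -/
import Mathlib

section
/- Let (E, M) be an orthogonal factorisation system on a category C, let S and T be monads on C, and let m : S → T be a monad morphism. Suppose E is closed under S (i.e. for every morphism e in E, S(e) is again in E). Then there exist a monad S' on C and monad morphisms e : S → S' and m' : S' → T such that m' ∘ e = m, every component e_X lies in E, every component m'_X lies in M, and moreover E is closed under S'. -/
open CategoryTheory

universe v u

/-- An orthogonal factorisation system on a category `C`. -/
structure IsOFS {C : Type u} [Category.{v} C] (E M : MorphismProperty C) : Prop where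
  comp_E : ∀ {X Y Z : C} (f : X ⟶ Y) (g : Y ⟶ Z), E f → E g → E (f ≫ g)
  comp_M : ∀ {X Y Z : C} (f : X ⟶ Y) (g : Y ⟶ Z), M f → M g → M (f ≫ g)
  iso_E : ∀ {X Y : C} (f : X ⟶ Y), IsIso f → E f
  iso_M : ∀ {X Y : C} (f : X ⟶ Y), IsIso f → M f
  exists_fac : ∀ {X Y : C} (f : X ⟶ Y),
      ∃ (A : C) (e : X ⟶ A) (m : A ⟶ Y), E e ∧ M m ∧ e ≫ m = f
  fillin : ∀ {W X Y Z : C} (e : W ⟶ X) (m : Y ⟶ Z) (f : W ⟶ Y) (g : X ⟶ Z),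
      E e → M m → f ≫ m = e ≫ g → ∃! h : X ⟶ Y, e ≫ h = f ∧ h ≫ m = g

/-- Factorisation of a monad morphism through a monad, with the middle monad again
compatible with the factorisation system. -/
theorem monad_factorisation {C : Type u} [Category.{v} C]
    (E M : MorphismProperty C) (hOFS : IsOFS E M)
    (S T : Monad C) (m : S ⟶ T)
    (hS : ∀ {X Y : C} (f : X ⟶ Y), E f → E (S.map f)) :
    ∃ (S' : Monad C) (e : S ⟶ S') (m' : S' ⟶ T),
      e ≫ m' = m ∧
      (∀ X : C, E (e.app X)) ∧
      (∀ X : C, M (m'.app X)) ∧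
      (∀ {X Y : C} (f : X ⟶ Y), E f → E (S'.map f)) := by
  classical
  -- right cancellation property of `E`
  have cancel : ∀ {X Y Z : C} (u : X ⟶ Y) (v : Y ⟶ Z), E u → E (u ≫ v) → E v := by
    intro X Y Z u v hu huv
    obtain ⟨A, e', m'', he', hm'', hfac⟩ := hOFS.exists_fac v
    obtain ⟨h, ⟨h1, h2⟩, -⟩ := hOFS.fillin (u ≫ v) m'' (u ≫ e') (𝟙 Z) huv hm''
      (by rw [Category.assoc, hfac, Category.comp_id])
    have hveq : v ≫ h = e' := by
      obtain ⟨k, -, huk⟩ := hOFS.fillin u m'' (u ≫ e') v hu hm''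
        (by rw [Category.assoc, hfac])
      rw [huk (v ≫ h) ⟨by rw [← Category.assoc]; exact h1,
        by rw [Category.assoc, h2, Category.comp_id]⟩, huk e' ⟨rfl, hfac⟩]
    have hmh : m'' ≫ h = 𝟙 A := by
      obtain ⟨k, -, huk⟩ := hOFS.fillin e' m'' e' m'' he' hm'' rfl
      rw [huk (m'' ≫ h) ⟨by rw [← Category.assoc, hfac, hveq],
        by rw [Category.assoc, h2, Category.comp_id]⟩,
        huk (𝟙 A) ⟨Category.comp_id _, Category.id_comp _⟩]
    have : IsIso m'' := ⟨h, hmh, h2⟩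
    rw [← hfac]
    exact hOFS.comp_E _ _ he' (hOFS.iso_E m'' this)
  have fillinE : ∀ {W X Y Z : C} (e : W ⟶ X) (mm : Y ⟶ Z) (f : W ⟶ Y) (g : X ⟶ Z),
      E e → M mm → f ≫ mm = e ≫ g →
      ∃ h : X ⟶ Y, (e ≫ h = f ∧ h ≫ mm = g) ∧
        ∀ h' : X ⟶ Y, e ≫ h' = f → h' ≫ mm = g → h' = h := by
    intro W X Y Z e mm f g he hm hsq
    obtain ⟨h, hp, hu⟩ := hOFS.fillin e mm f g he hm hsq
    exact ⟨h, hp, fun h' p1 p2 => hu h' ⟨p1, p2⟩⟩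
  -- factor each component of m
  choose A0 e0 m0 he0 hm0 hfac0 using fun X : C => hOFS.exists_fac (m.app X)
  -- functor action
  have mapEx := fun (X Y : C) (f : X ⟶ Y) =>
    fillinE (e0 X) (m0 Y) (S.map f ≫ e0 Y) (m0 X ≫ T.map f) (he0 X) (hm0 Y)
      (by rw [Category.assoc, hfac0, ← Category.assoc, hfac0]
          exact m.toNatTrans.naturality f)
  choose Smap hmap12 hmapu using mapEx
  choose hmap1 hmap2 using hmap12
  -- equality via orthogonality
  have eq_of : ∀ {W Z Y : C} (ε : W ⟶ Z) (_ : E ε) (a b : Z ⟶ A0 Y),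
      ε ≫ a = ε ≫ b → a ≫ m0 Y = b ≫ m0 Y → a = b := by
    intro W Z Y ε hε a b h1 h2
    obtain ⟨k, -, huk⟩ := hOFS.fillin ε (m0 Y) (ε ≫ a) (b ≫ m0 Y) hε (hm0 Y)
      (by rw [Category.assoc, h2])
    rw [huk a ⟨rfl, h2⟩, huk b ⟨h1.symm, rfl⟩]
  have hmapu' : ∀ {X Y : C} (f : X ⟶ Y) (h : A0 X ⟶ A0 Y),
      e0 X ≫ h = S.map f ≫ e0 Y → h ≫ m0 Y = m0 X ≫ T.map f → h = Smap X Y f :=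
    fun f h p1 p2 => hmapu _ _ f h p1 p2
  -- the functor S'
  let F : C ⥤ C :=
    { obj := A0
      map := fun {X Y} f => Smap X Y f
      map_id := fun X => (hmapu' (𝟙 X) (𝟙 (A0 X)) (by simp) (by simp)).symm
      map_comp := fun {X Y Z} f g => (hmapu' (f ≫ g) (Smap X Y f ≫ Smap Y Z g)
        (by rw [← Category.assoc, hmap1, Category.assoc, hmap1, ← Category.assoc,
              ← S.map_comp])
        (by rw [Category.assoc, hmap2, ← Category.assoc, hmap2, Category.assoc,
              ← T.map_comp])).symm }
  -- the E-part of the multiplication square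
  have hε : ∀ X : C, E (S.map (e0 X) ≫ e0 (A0 X)) :=
    fun X => hOFS.comp_E _ _ (hS _ (he0 X)) (he0 (A0 X))
  -- multiplication
  choose μ0 hμ12 hμu using fun X : C =>
    fillinE (S.map (e0 X) ≫ e0 (A0 X)) (m0 X) (S.μ.app X ≫ e0 X)
      ((m0 (A0 X) ≫ T.map (m0 X)) ≫ T.μ.app X) (hε X) (hm0 X)
      (by
        rw [Category.assoc, hfac0]
        have h1 : m.app (S.obj X) ≫ T.map (m.app X) = S.map (m.app X) ≫ m.app (T.obj X) :=
          (m.toNatTrans.naturality (m.app X)).symm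
        calc S.μ.app X ≫ m.app X
            = (S.map (m.app X) ≫ m.app (T.obj X)) ≫ T.μ.app X := m.app_μ X
          _ = (m.app (S.obj X) ≫ T.map (m.app X)) ≫ T.μ.app X := by rw [h1]
          _ = m.app (S.obj X) ≫ (T.map (e0 X ≫ m0 X)) ≫ T.μ.app X := by
              rw [hfac0, Category.assoc]
          _ = m.app (S.obj X) ≫ (T.map (e0 X) ≫ T.map (m0 X)) ≫ T.μ.app X := by
              rw [T.map_comp]
          _ = (m.app (S.obj X) ≫ T.map (e0 X)) ≫ T.map (m0 X) ≫ T.μ.app X := by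
              simp only [Category.assoc]
          _ = (S.map (e0 X) ≫ m.app (A0 X)) ≫ T.map (m0 X) ≫ T.μ.app X := by
              rw [m.toNatTrans.naturality (e0 X)]
          _ = (S.map (e0 X) ≫ e0 (A0 X)) ≫ (m0 (A0 X) ≫ T.map (m0 X)) ≫ T.μ.app X := by
              rw [← hfac0 (A0 X)]; simp only [Category.assoc])
  choose hμ1 hμ2 using hμ12
  -- reassociated helper lemmas
  have hmap1a : ∀ (X Y : C) (f : X ⟶ Y) {W : C} (k : A0 Y ⟶ W),
      e0 X ≫ Smap X Y f ≫ k = S.map f ≫ e0 Y ≫ k := by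
    intro X Y f W k; simp only [← Category.assoc]; rw [hmap1]
  have hmap2a : ∀ (X Y : C) (f : X ⟶ Y) {W : C} (k : T.obj Y ⟶ W),
      Smap X Y f ≫ m0 Y ≫ k = m0 X ≫ T.map f ≫ k := by
    intro X Y f W k; simp only [← Category.assoc]; rw [hmap2]
  have hμ1a : ∀ (X : C) {W : C} (k : A0 X ⟶ W),
      S.map (e0 X) ≫ e0 (A0 X) ≫ μ0 X ≫ k = S.μ.app X ≫ e0 X ≫ k := by
    intro X W k; simp only [← Category.assoc]; rw [hμ1]
  have hμ2a : ∀ (X : C) {W : C} (k : T.obj X ⟶ W),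
      μ0 X ≫ m0 X ≫ k = m0 (A0 X) ≫ T.map (m0 X) ≫ T.μ.app X ≫ k := by
    intro X W k; simp only [← Category.assoc]; rw [hμ2]
  have hμ1b : ∀ (X : C),
      S.map (e0 X) ≫ e0 (A0 X) ≫ μ0 X = S.μ.app X ≫ e0 X := by
    intro X; rw [← Category.assoc]; exact hμ1 X
  have hμ2b : ∀ (X : C),
      μ0 X ≫ m0 X = m0 (A0 X) ≫ T.map (m0 X) ≫ T.μ.app X := by
    intro X; rw [hμ2, Category.assoc]
  have hfac0a : ∀ (X : C) {W : C} (k : T.obj X ⟶ W),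
      e0 X ≫ m0 X ≫ k = m.app X ≫ k := by
    intro X W k; rw [← Category.assoc, hfac0]
  have Sμ_nat : ∀ {X Y : C} (f : X ⟶ Y) {W : C} (k : S.obj Y ⟶ W),
      S.map (S.map f) ≫ S.μ.app Y ≫ k = S.μ.app X ≫ S.map f ≫ k := by
    intro X Y f W k; simp only [← Category.assoc]; congr 1; exact S.μ.naturality f
  have Tμ_nat : ∀ {X Y : C} (f : X ⟶ Y) {W : C} (k : T.obj Y ⟶ W),
      T.map (T.map f) ≫ T.μ.app Y ≫ k = T.μ.app X ≫ T.map f ≫ k := by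
    intro X Y f W k; simp only [← Category.assoc]; congr 1; exact T.μ.naturality f
  have Sη_nat : ∀ {X Y : C} (f : X ⟶ Y) {W : C} (k : S.obj Y ⟶ W),
      f ≫ S.η.app Y ≫ k = S.η.app X ≫ S.map f ≫ k := by
    intro X Y f W k; simp only [← Category.assoc]; congr 1; exact S.η.naturality f
  have Tη_nat : ∀ {X Y : C} (f : X ⟶ Y) {W : C} (k : T.obj Y ⟶ W),
      f ≫ T.η.app Y ≫ k = T.η.app X ≫ T.map f ≫ k := by
    intro X Y f W k; simp only [← Category.assoc]; congr 1; exact T.η.naturality f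
  have mη_a : ∀ (X : C) {W : C} (k : T.obj X ⟶ W),
      S.η.app X ≫ m.app X ≫ k = T.η.app X ≫ k := by
    intro X W k; rw [← Category.assoc, m.app_η]
  have Slu : ∀ (X : C) {W : C} (k : S.obj X ⟶ W),
      S.η.app (S.obj X) ≫ S.μ.app X ≫ k = k := by
    intro X W k; rw [← Category.assoc, S.left_unit, Category.id_comp]
  have Sru : ∀ (X : C) {W : C} (k : S.obj X ⟶ W),
      S.map (S.η.app X) ≫ S.μ.app X ≫ k = k := by
    intro X W k; rw [← Category.assoc, S.right_unit, Category.id_comp]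
  have Tlu : ∀ (X : C) {W : C} (k : T.obj X ⟶ W),
      T.η.app (T.obj X) ≫ T.μ.app X ≫ k = k := by
    intro X W k; rw [← Category.assoc, T.left_unit, Category.id_comp]
  have Tru : ∀ (X : C) {W : C} (k : T.obj X ⟶ W),
      T.map (T.η.app X) ≫ T.μ.app X ≫ k = k := by
    intro X W k; rw [← Category.assoc, T.right_unit, Category.id_comp]
  have Sassoc_a : ∀ (X : C) {W : C} (k : S.obj X ⟶ W),
      S.map (S.μ.app X) ≫ S.μ.app X ≫ k = S.μ.app (S.obj X) ≫ S.μ.app X ≫ k := by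
    intro X W k; simp only [← Category.assoc]; rw [S.assoc]
  have Tassoc_a : ∀ (X : C) {W : C} (k : T.obj X ⟶ W),
      T.map (T.μ.app X) ≫ T.μ.app X ≫ k = T.μ.app (T.obj X) ≫ T.μ.app X ≫ k := by
    intro X W k; simp only [← Category.assoc]; rw [T.assoc]
  have Tμ_natb : ∀ {X Y : C} (f : X ⟶ Y),
      T.map (T.map f) ≫ T.μ.app Y = T.μ.app X ≫ T.map f :=
    fun f => T.μ.naturality f
  have Tassoc_b : ∀ (X : C),
      T.map (T.μ.app X) ≫ T.μ.app X = T.μ.app (T.obj X) ≫ T.μ.app X :=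
    fun X => T.assoc X
  -- the monad S'
  let S' : Monad C :=
    { toFunctor := F
      η := { app := fun X => S.η.app X ≫ e0 X
             naturality := by
               intro X Y f
               show f ≫ S.η.app Y ≫ e0 Y = (S.η.app X ≫ e0 X) ≫ Smap X Y f
               rw [Category.assoc, Sη_nat]
               congr 1
               exact (hmap1 X Y f).symm }
      μ := { app := μ0
             naturality := by
               intro X Y f
               show Smap (A0 X) (A0 Y) (Smap X Y f) ≫ μ0 Y = μ0 X ≫ Smap X Y f
               apply eq_of (S.map (e0 X) ≫ e0 (A0 X)) (hε X)
               · calc (S.map (e0 X) ≫ e0 (A0 X)) ≫ Smap (A0 X) (A0 Y) (Smap X Y f) ≫ μ0 Y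
                     = S.map (e0 X) ≫ S.map (Smap X Y f) ≫ e0 (A0 Y) ≫ μ0 Y := by
                       rw [Category.assoc, hmap1a]
                   _ = (S.map (S.map f) ≫ S.map (e0 Y)) ≫ e0 (A0 Y) ≫ μ0 Y := by
                       rw [← Category.assoc, ← S.map_comp, hmap1, S.map_comp]
                   _ = S.map (S.map f) ≫ S.μ.app Y ≫ e0 Y := by
                       rw [Category.assoc, hμ1b]
                   _ = S.μ.app X ≫ S.map f ≫ e0 Y := by rw [Sμ_nat]
                   _ = (S.map (e0 X) ≫ e0 (A0 X)) ≫ μ0 X ≫ Smap X Y f := by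
                       rw [Category.assoc, hμ1a]
                       congr 1
                       exact (hmap1 X Y f).symm
               · calc (Smap (A0 X) (A0 Y) (Smap X Y f) ≫ μ0 Y) ≫ m0 Y
                     = Smap (A0 X) (A0 Y) (Smap X Y f) ≫ m0 (A0 Y) ≫ T.map (m0 Y) ≫ T.μ.app Y := by
                       rw [Category.assoc, hμ2b]
                   _ = m0 (A0 X) ≫ T.map (Smap X Y f) ≫ T.map (m0 Y) ≫ T.μ.app Y := by
                       rw [hmap2a]
                   _ = m0 (A0 X) ≫ T.map (m0 X) ≫ T.map (T.map f) ≫ T.μ.app Y := by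
                       rw [← Functor.map_comp_assoc, hmap2, Functor.map_comp_assoc]
                   _ = m0 (A0 X) ≫ T.map (m0 X) ≫ T.μ.app X ≫ T.map f := by rw [Tμ_natb]
                   _ = (μ0 X ≫ Smap X Y f) ≫ m0 Y := by
                       rw [Category.assoc, hmap2, hμ2a] }
      left_unit := by
        intro X
        show (S.η.app (A0 X) ≫ e0 (A0 X)) ≫ μ0 X = 𝟙 (A0 X)
        apply eq_of (e0 X) (he0 X)
        · rw [Category.assoc, Category.comp_id, Sη_nat, hμ1b, Slu]
        · rw [Category.id_comp, Category.assoc, Category.assoc, hμ2b, hfac0a, mη_a,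
            ← Tη_nat, T.left_unit]
          simp
      right_unit := by
        intro X
        show Smap X (A0 X) (S.η.app X ≫ e0 X) ≫ μ0 X = 𝟙 (A0 X)
        apply eq_of (e0 X) (he0 X)
        · rw [Category.comp_id, hmap1a, Functor.map_comp_assoc, hμ1b, Sru]
        · rw [Category.id_comp, Category.assoc, hμ2b, hmap2a, ← Functor.map_comp_assoc,
            Category.assoc, hfac0, m.app_η, T.right_unit]
          simp
      assoc := by
        intro X
        show Smap (A0 (A0 X)) (A0 X) (μ0 X) ≫ μ0 X = μ0 (A0 X) ≫ μ0 X
        apply eq_of (S.map (S.map (e0 X) ≫ e0 (A0 X)) ≫ e0 (A0 (A0 X)))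
          (hOFS.comp_E _ _ (hS _ (hε X)) (he0 (A0 (A0 X))))
        · calc (S.map (S.map (e0 X) ≫ e0 (A0 X)) ≫ e0 (A0 (A0 X))) ≫
                Smap (A0 (A0 X)) (A0 X) (μ0 X) ≫ μ0 X
              = S.map (S.map (e0 X) ≫ e0 (A0 X)) ≫ S.map (μ0 X) ≫ e0 (A0 X) ≫ μ0 X := by
                rw [Category.assoc, hmap1a]
            _ = S.map (S.μ.app X) ≫ S.map (e0 X) ≫ e0 (A0 X) ≫ μ0 X := by
                rw [← Functor.map_comp_assoc, hμ1, Functor.map_comp_assoc]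
            _ = S.map (S.μ.app X) ≫ S.μ.app X ≫ e0 X := by rw [hμ1b]
            _ = S.μ.app (S.obj X) ≫ S.μ.app X ≫ e0 X := by rw [Sassoc_a]
            _ = S.map (S.map (e0 X)) ≫ S.μ.app (A0 X) ≫ e0 (A0 X) ≫ μ0 X := by
                rw [Sμ_nat, hμ1b]
            _ = (S.map (S.map (e0 X) ≫ e0 (A0 X)) ≫ e0 (A0 (A0 X))) ≫ μ0 (A0 X) ≫ μ0 X := by
                rw [Category.assoc, Functor.map_comp_assoc, hμ1a]
        · calc (Smap (A0 (A0 X)) (A0 X) (μ0 X) ≫ μ0 X) ≫ m0 X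
              = Smap (A0 (A0 X)) (A0 X) (μ0 X) ≫ m0 (A0 X) ≫ T.map (m0 X) ≫ T.μ.app X := by
                rw [Category.assoc, hμ2b]
            _ = m0 (A0 (A0 X)) ≫ T.map (μ0 X) ≫ T.map (m0 X) ≫ T.μ.app X := by
                rw [hmap2a]
            _ = m0 (A0 (A0 X)) ≫ T.map (m0 (A0 X)) ≫ T.map (T.map (m0 X)) ≫
                  T.map (T.μ.app X) ≫ T.μ.app X := by
                rw [← Functor.map_comp_assoc, hμ2]
                simp only [Functor.map_comp, Category.assoc]
            _ = m0 (A0 (A0 X)) ≫ T.map (m0 (A0 X)) ≫ T.map (T.map (m0 X)) ≫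
                  T.μ.app (T.obj X) ≫ T.μ.app X := by
                rw [Tassoc_b]
            _ = m0 (A0 (A0 X)) ≫ T.map (m0 (A0 X)) ≫ T.μ.app (A0 X) ≫ T.map (m0 X) ≫
                  T.μ.app X := by rw [Tμ_nat]
            _ = (μ0 (A0 X) ≫ μ0 X) ≫ m0 X := by
                rw [Category.assoc, hμ2b, hμ2a] }
  -- the monad morphisms
  let eH : S ⟶ S' :=
    { app := fun X => e0 X
      naturality := fun X Y f => (hmap1 X Y f).symm
      app_η := fun X => rfl
      app_μ := fun X => (hμ1 X).symm
    }
  let mH : S' ⟶ T :=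
    { app := m0
      naturality := fun X Y f => hmap2 X Y f
      app_η := by
        intro X
        show (S.η.app X ≫ e0 X) ≫ m0 X = T.η.app X
        rw [Category.assoc, hfac0]; exact m.app_η X
      app_μ := by
        intro X
        show μ0 X ≫ m0 X = (Smap (A0 X) (T.obj X) (m0 X) ≫ m0 (T.obj X)) ≫ T.μ.app X
        rw [hμ2, hmap2]
    }
  refine ⟨S', eH, mH, ?_, he0, hm0, ?_⟩
  · exact MonadHom.ext' _ _ (funext fun X => hfac0 X)
  · intro X Y f hf
    exact cancel (e0 X) (Smap X Y f) (he0 X)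
      (by rw [hmap1]; exact hOFS.comp_E _ _ (hS f hf) (he0 Y))
end

section
/- Let (E, M) be an orthogonal factorisation system on a category C. Let S, T, S', T' be monads on C such that E is closed under S and under S', let m : S → T and m'' : S' → T' be monad morphisms, and let f₁ : S → S' and f₂ : T → T' be monad morphisms forming a commuting square, i.e. f₂ ∘ m = m'' ∘ f₁ (componentwise). Suppose m factors as m = n ∘ e with e : S → M₀, n : M₀ → T monad morphisms whose components lie in E and M respectively, and similarly m'' = n' ∘ e' with e' : S' → M₀', n' : M₀' → T' having components in E and M respectively. Then there exists a unique monad morphism h : M₀ → M₀' such that h ∘ e = e' ∘ f₁ and n' ∘ h = f₂ ∘ n (componentwise). -/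
open CategoryTheory

universe v u

/-- Functoriality of the factorisation of monad morphisms: a commuting square of monad
morphisms induces a unique monad morphism between the middle monads of the
factorisations. -/
theorem monad_factorisation_functorial {C : Type u} [Category.{v} C]
    (E M : MorphismProperty C) (hOFS : IsOFS E M)
    (S T S' T' : Monad C)
    (hS : ∀ {X Y : C} (f : X ⟶ Y), E f → E (S.map f))
    (hS' : ∀ {X Y : C} (f : X ⟶ Y), E f → E (S'.map f))
    (m : S ⟶ T) (m'' : S' ⟶ T')
    (f₁ : S ⟶ S') (f₂ : T ⟶ T')
    (hsq : ∀ X : C, m.app X ≫ f₂.app X = f₁.app X ≫ m''.app X)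
    (M₀ : Monad C) (e : S ⟶ M₀) (n : M₀ ⟶ T)
    (hfac : e ≫ n = m) (he : ∀ X : C, E (e.app X)) (hn : ∀ X : C, M (n.app X))
    (M₀' : Monad C) (e' : S' ⟶ M₀') (n' : M₀' ⟶ T')
    (hfac' : e' ≫ n' = m'') (he' : ∀ X : C, E (e'.app X)) (hn' : ∀ X : C, M (n'.app X)) :
    ∃! h : M₀ ⟶ M₀',
      (∀ X : C, e.app X ≫ h.app X = f₁.app X ≫ e'.app X) ∧
      (∀ X : C, h.app X ≫ n'.app X = n.app X ≫ f₂.app X) := by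
  have hfacX : ∀ X : C, e.app X ≫ n.app X = m.app X := fun X =>
    congrArg (fun (t : S ⟶ T) => t.app X) hfac
  have hfacX' : ∀ X : C, e'.app X ≫ n'.app X = m''.app X := fun X =>
    congrArg (fun (t : S' ⟶ T') => t.app X) hfac'
  have key : ∀ X : C, ∃! hX : M₀.obj X ⟶ M₀'.obj X,
      e.app X ≫ hX = f₁.app X ≫ e'.app X ∧ hX ≫ n'.app X = n.app X ≫ f₂.app X := by
    intro X
    apply hOFS.fillin _ _ _ _ (he X) (hn' X)
    rw [Category.assoc, hfacX', ← hsq, ← hfacX, Category.assoc]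
  -- componentwise fill-in
  let hap : ∀ X : C, M₀.obj X ⟶ M₀'.obj X := fun X => (key X).exists.choose
  have hap₁ : ∀ X : C, e.app X ≫ hap X = f₁.app X ≫ e'.app X :=
    fun X => (key X).exists.choose_spec.1
  have hap₂ : ∀ X : C, hap X ≫ n'.app X = n.app X ≫ f₂.app X :=
    fun X => (key X).exists.choose_spec.2
  have huniq : ∀ (X : C) (k : M₀.obj X ⟶ M₀'.obj X),
      e.app X ≫ k = f₁.app X ≫ e'.app X → k ≫ n'.app X = n.app X ≫ f₂.app X →
      k = hap X := fun X k h1 h2 =>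
    (key X).unique ⟨h1, h2⟩ ⟨hap₁ X, hap₂ X⟩
  -- naturality
  have hnat : ∀ {X Y : C} (f : X ⟶ Y), M₀.map f ≫ hap Y = hap X ≫ M₀'.map f := by
    intro X Y f
    have c1 : e.app X ≫ M₀.map f ≫ hap Y = f₁.app X ≫ e'.app X ≫ M₀'.map f := by
      calc e.app X ≫ M₀.map f ≫ hap Y
          = S.map f ≫ e.app Y ≫ hap Y := by
            rw [e.toNatTrans.naturality_assoc]
        _ = S.map f ≫ f₁.app Y ≫ e'.app Y := by rw [hap₁]
        _ = f₁.app X ≫ S'.map f ≫ e'.app Y := by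
            rw [f₁.toNatTrans.naturality_assoc]
        _ = f₁.app X ≫ e'.app X ≫ M₀'.map f := by rw [e'.toNatTrans.naturality]
    have c2 : (M₀.map f ≫ hap Y) ≫ n'.app Y = n.app X ≫ f₂.app X ≫ T'.map f := by
      calc (M₀.map f ≫ hap Y) ≫ n'.app Y
          = M₀.map f ≫ n.app Y ≫ f₂.app Y := by rw [Category.assoc, hap₂]
        _ = n.app X ≫ T.map f ≫ f₂.app Y := by rw [n.toNatTrans.naturality_assoc]
        _ = n.app X ≫ f₂.app X ≫ T'.map f := by rw [f₂.toNatTrans.naturality]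
    have d1 : e.app X ≫ hap X ≫ M₀'.map f = f₁.app X ≫ e'.app X ≫ M₀'.map f := by
      rw [← Category.assoc, hap₁, Category.assoc]
    have d2 : (hap X ≫ M₀'.map f) ≫ n'.app Y = n.app X ≫ f₂.app X ≫ T'.map f := by
      rw [Category.assoc, n'.toNatTrans.naturality, ← Category.assoc, hap₂,
        Category.assoc]
    obtain ⟨w, -, hw⟩ := hOFS.fillin (e.app X) (n'.app Y)
      (f₁.app X ≫ e'.app X ≫ M₀'.map f) (n.app X ≫ f₂.app X ≫ T'.map f)
      (he X) (hn' Y) (by rw [← c1, Category.assoc, c2])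
    rw [hw _ ⟨c1, c2⟩, hw _ ⟨d1, d2⟩]
  -- unit compatibility
  have hη : ∀ X : C, M₀.η.app X ≫ hap X = M₀'.η.app X := by
    intro X
    rw [← e.app_η, Category.assoc, hap₁, ← Category.assoc, f₁.app_η, e'.app_η]
  -- multiplication compatibility
  have hμ : ∀ X : C, M₀.μ.app X ≫ hap X =
      (M₀.map (hap X) ≫ hap (M₀'.obj X)) ≫ M₀'.μ.app X := by
    intro X
    have hE : E (S.map (e.app X) ≫ e.app (M₀.obj X)) :=
      hOFS.comp_E _ _ (hS _ (he X)) (he _)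
    have c1 : (S.map (e.app X) ≫ e.app (M₀.obj X)) ≫ M₀.μ.app X ≫ hap X =
        S.μ.app X ≫ f₁.app X ≫ e'.app X := by
      calc (S.map (e.app X) ≫ e.app (M₀.obj X)) ≫ M₀.μ.app X ≫ hap X
          = ((S.map (e.app X) ≫ e.app (M₀.obj X)) ≫ M₀.μ.app X) ≫ hap X := by
            simp only [Category.assoc]
        _ = (S.μ.app X ≫ e.app X) ≫ hap X := by rw [← e.app_μ]
        _ = S.μ.app X ≫ f₁.app X ≫ e'.app X := by rw [Category.assoc, hap₁]
    have c2 : (M₀.μ.app X ≫ hap X) ≫ n'.app X =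
        M₀.map (n.app X ≫ f₂.app X) ≫ n.app (T'.obj X) ≫ f₂.app (T'.obj X) ≫
          T'.μ.app X := by
      calc (M₀.μ.app X ≫ hap X) ≫ n'.app X
          = M₀.μ.app X ≫ n.app X ≫ f₂.app X := by rw [Category.assoc, hap₂]
        _ = M₀.map (n.app X) ≫ n.app (T.obj X) ≫ T.μ.app X ≫ f₂.app X := by
            rw [n.app_μ_assoc]
        _ = M₀.map (n.app X) ≫ n.app (T.obj X) ≫ T.map (f₂.app X) ≫
              f₂.app (T'.obj X) ≫ T'.μ.app X := by
            rw [f₂.app_μ]; simp only [Category.assoc]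
        _ = M₀.map (n.app X) ≫ M₀.map (f₂.app X) ≫ n.app (T'.obj X) ≫
              f₂.app (T'.obj X) ≫ T'.μ.app X := by
            rw [n.toNatTrans.naturality_assoc (f₂.app X)]
        _ = M₀.map (n.app X ≫ f₂.app X) ≫ n.app (T'.obj X) ≫ f₂.app (T'.obj X) ≫
              T'.μ.app X := by rw [M₀.map_comp, Category.assoc]
    have d1 : (S.map (e.app X) ≫ e.app (M₀.obj X)) ≫
        (M₀.map (hap X) ≫ hap (M₀'.obj X)) ≫ M₀'.μ.app X =
        S.μ.app X ≫ f₁.app X ≫ e'.app X := by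
      calc (S.map (e.app X) ≫ e.app (M₀.obj X)) ≫
            (M₀.map (hap X) ≫ hap (M₀'.obj X)) ≫ M₀'.μ.app X
          = S.map (e.app X) ≫ e.app (M₀.obj X) ≫ M₀.map (hap X) ≫
              hap (M₀'.obj X) ≫ M₀'.μ.app X := by simp only [Category.assoc]
        _ = S.map (e.app X) ≫ S.map (hap X) ≫ e.app (M₀'.obj X) ≫
              hap (M₀'.obj X) ≫ M₀'.μ.app X := by
            rw [← e.toNatTrans.naturality_assoc]
        _ = S.map (e.app X) ≫ S.map (hap X) ≫ f₁.app (M₀'.obj X) ≫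
              e'.app (M₀'.obj X) ≫ M₀'.μ.app X := by
            rw [← Category.assoc (e.app (M₀'.obj X)), hap₁, Category.assoc]
        _ = S.map (f₁.app X) ≫ S.map (e'.app X) ≫ f₁.app (M₀'.obj X) ≫
              e'.app (M₀'.obj X) ≫ M₀'.μ.app X := by
            rw [← S.map_comp_assoc, hap₁, S.map_comp_assoc]
        _ = S.map (f₁.app X) ≫ f₁.app (S'.obj X) ≫ S'.map (e'.app X) ≫
              e'.app (M₀'.obj X) ≫ M₀'.μ.app X := by
            rw [f₁.toNatTrans.naturality_assoc]
        _ = S.map (f₁.app X) ≫ f₁.app (S'.obj X) ≫ S'.μ.app X ≫ e'.app X := by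
            rw [← Category.assoc (S'.map (e'.app X)), ← e'.app_μ]
        _ = ((S.map (f₁.app X) ≫ f₁.app (S'.obj X)) ≫ S'.μ.app X) ≫ e'.app X := by
            simp only [Category.assoc]
        _ = S.μ.app X ≫ f₁.app X ≫ e'.app X := by rw [← f₁.app_μ, Category.assoc]
    have d2 : ((M₀.map (hap X) ≫ hap (M₀'.obj X)) ≫ M₀'.μ.app X) ≫ n'.app X =
        M₀.map (n.app X ≫ f₂.app X) ≫ n.app (T'.obj X) ≫ f₂.app (T'.obj X) ≫
          T'.μ.app X := by
      calc ((M₀.map (hap X) ≫ hap (M₀'.obj X)) ≫ M₀'.μ.app X) ≫ n'.app X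
          = M₀.map (hap X) ≫ hap (M₀'.obj X) ≫ M₀'.μ.app X ≫ n'.app X := by
            simp only [Category.assoc]
        _ = M₀.map (hap X) ≫ hap (M₀'.obj X) ≫ M₀'.map (n'.app X) ≫
              n'.app (T'.obj X) ≫ T'.μ.app X := by
            rw [n'.app_μ]; simp only [Category.assoc]
        _ = M₀.map (hap X) ≫ M₀.map (n'.app X) ≫ hap (T'.obj X) ≫
              n'.app (T'.obj X) ≫ T'.μ.app X := by
            rw [← Category.assoc (hap (M₀'.obj X)), ← hnat (n'.app X),
              Category.assoc]
        _ = M₀.map (hap X) ≫ M₀.map (n'.app X) ≫ n.app (T'.obj X) ≫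
              f₂.app (T'.obj X) ≫ T'.μ.app X := by
            rw [← Category.assoc (hap (T'.obj X)), hap₂, Category.assoc]
        _ = M₀.map (n.app X ≫ f₂.app X) ≫ n.app (T'.obj X) ≫ f₂.app (T'.obj X) ≫
              T'.μ.app X := by
            rw [← M₀.map_comp_assoc, hap₂, M₀.map_comp_assoc]
    obtain ⟨w, -, hw⟩ := hOFS.fillin (S.map (e.app X) ≫ e.app (M₀.obj X)) (n'.app X)
      (S.μ.app X ≫ f₁.app X ≫ e'.app X)
      (M₀.map (n.app X ≫ f₂.app X) ≫ n.app (T'.obj X) ≫ f₂.app (T'.obj X) ≫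
        T'.μ.app X)
      hE (hn' X) (by rw [← c1, Category.assoc, c2])
    rw [hw _ ⟨c1, c2⟩, hw _ ⟨d1, d2⟩]
  -- assemble the monad morphism
  refine ⟨{ toNatTrans := { app := hap, naturality := fun X Y f => hnat f },
            app_η := hη, app_μ := hμ }, ⟨hap₁, hap₂⟩, ?_⟩
  rintro h ⟨h1, h2⟩
  apply MonadHom.ext
  funext X
  exact huniq X (h.app X) (h1 X) (h2 X)
end

section
/- Let C be a cartesian closed category and (E, M) an orthogonal factorisation system on C such that E is closed under binary products, i.e. for all e₁ : A₁ → B₁ and e₂ : A₂ → B₂ in E, the product morphism e₁ × e₂ : A₁ × A₂ → B₁ × B₂ is in E. Then for every object X of C and every morphism m' : X' → Y' in M, the induced morphism on exponentials (X ⇒ X') → (X ⇒ Y') (the action of the exponential functor (X ⇒ −) on m') is in M. -/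
open CategoryTheory MonoidalCategory

universe v u

/-- A morphism having the unique right lifting property against all of `E`
belongs to `M`. -/
lemma mem_M_of_ulp {C : Type u} [Category.{v} C]
    (E M : MorphismProperty C) (hOFS : IsOFS E M)
    {P Q : C} (p : P ⟶ Q)
    (hp : ∀ {A B : C} (e : A ⟶ B) (u : A ⟶ P) (v : B ⟶ Q), E e → u ≫ p = e ≫ v →
      ∃! h : B ⟶ P, e ≫ h = u ∧ h ≫ p = v) : M p := by
  obtain ⟨I, e, m, hE, hM, hfac⟩ := hOFS.exists_fac p
  obtain ⟨h, ⟨h1, h2⟩, -⟩ := hp e (𝟙 P) m hE (by simp [hfac])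
  have : h ≫ e = 𝟙 I := by
    obtain ⟨k, -, huniq⟩ := hOFS.fillin e m e m hE hM rfl
    have k1 : k = h ≫ e := (huniq _ ⟨by rw [← Category.assoc, h1, Category.id_comp],
      by rw [Category.assoc, hfac, h2]⟩).symm
    have k2 : k = 𝟙 I := (huniq _ ⟨Category.comp_id _, Category.id_comp _⟩).symm
    rw [← k1, k2]
  have : IsIso e := ⟨h, h1, this⟩
  rw [← hfac]
  exact hOFS.comp_M e m (hOFS.iso_M e this) hM

/-- If the left class `E` of a factorisation system on a cartesian closed category is
closed under binary products, then exponentiation `X ⇒ (−)` preserves the right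
class `M`. -/
theorem exp_preserves_M {C : Type u} [Category.{v} C]
    [CartesianMonoidalCategory C] [MonoidalClosed C]
    (E M : MorphismProperty C) (hOFS : IsOFS E M)
    (hE_prod : ∀ {A₁ B₁ A₂ B₂ : C} (e₁ : A₁ ⟶ B₁) (e₂ : A₂ ⟶ B₂),
      E e₁ → E e₂ → E (e₁ ⊗ₘ e₂))
    (X : C) {X' Y' : C} (m' : X' ⟶ Y') (hm' : M m') :
    M ((ihom X).map m') := by
  apply mem_M_of_ulp E M hOFS
  intro A B e u v hE hsq
  have hEe : E (X ◁ e) := by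
    rw [← MonoidalCategory.id_tensorHom]
    exact hE_prod (𝟙 X) e (hOFS.iso_E _ inferInstance) hE
  have hsq' : MonoidalClosed.uncurry u ≫ m' = (X ◁ e) ≫ MonoidalClosed.uncurry v := by
    rw [← MonoidalClosed.uncurry_natural_right, ← MonoidalClosed.uncurry_natural_left, hsq]
  obtain ⟨h, ⟨h1, h2⟩, huniq⟩ := hOFS.fillin (X ◁ e) m' _ _ hEe hm' hsq'
  refine ⟨MonoidalClosed.curry h, ⟨?_, ?_⟩, ?_⟩
  · rw [← MonoidalClosed.curry_natural_left, h1, MonoidalClosed.curry_uncurry]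
  · rw [← MonoidalClosed.curry_natural_right, h2, MonoidalClosed.curry_uncurry]
  · intro k ⟨k1, k2⟩
    have : MonoidalClosed.uncurry k = h := by
      apply huniq
      constructor
      · rw [← MonoidalClosed.uncurry_natural_left, k1]
      · rw [← MonoidalClosed.uncurry_natural_right, k2]
    rw [← this, MonoidalClosed.curry_uncurry]
end

section
/- (Meseguer's diagonal fill-in for ωCPOs.) Let W, X, Y, Z be ω-complete partial orders. Let e : W → X be a dense ωScott-continuous map, m : Y → Z a full ωScott-continuous map, and f : W → Y, g : X → Z ωScott-continuous maps with m ∘ f = g ∘ e. Then there exists a unique ωScott-continuous map h : X → Y such that h ∘ e = f and m ∘ h = g. -/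
open OmegaCompletePartialOrder

/-- A subset of an ωcpo is ω-chain-closed when it is closed under least upper bounds of
ω-chains contained in it. -/
def ChainClosed {α : Type*} [OmegaCompletePartialOrder α] (U : Set α) : Prop :=
  ∀ c : Chain α, (∀ n : ℕ, c n ∈ U) → ωSup c ∈ U

/-- An ωScott-continuous map is dense when the only ω-chain-closed subset of its codomain
containing its image is the whole codomain. -/
def IsDenseMap {α β : Type*} [OmegaCompletePartialOrder α] [OmegaCompletePartialOrder β]
    (e : α →𝒄 β) : Prop :=
  ∀ U : Set β, ChainClosed U → Set.range e ⊆ U → U = Set.univ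

/-- An ωScott-continuous map is full when it reflects the order. -/
def IsFullMap {α β : Type*} [OmegaCompletePartialOrder α] [OmegaCompletePartialOrder β]
    (m : α →𝒄 β) : Prop :=
  ∀ x x' : α, m x ≤ m x' → x ≤ x'

/-- Meseguer's diagonal fill-in property for the (dense, full) factorisation system on
ω-complete partial orders. -/
theorem omegaCPO_diagonal_fillin
    {W X Y Z : Type*}
    [OmegaCompletePartialOrder W] [OmegaCompletePartialOrder X]
    [OmegaCompletePartialOrder Y] [OmegaCompletePartialOrder Z]
    (e : W →𝒄 X) (m : Y →𝒄 Z) (f : W →𝒄 Y) (g : X →𝒄 Z)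
    (he : IsDenseMap e) (hm : IsFullMap m)
    (hsq : ∀ w : W, m (f w) = g (e w)) :
    ∃! h : X →𝒄 Y, (∀ w : W, h (e w) = f w) ∧ (∀ x : X, m (h x) = g x) := by
  have hinj : Function.Injective m := fun a b hab =>
    le_antisymm (hm _ _ hab.le) (hm _ _ hab.ge)
  set S : Set X := {x | ∃ y : Y, m y = g x} with hSdef
  have hS : ChainClosed S := by
    intro c hc
    choose y hy using hc
    have mono : Monotone y := fun i j hij =>
      hm _ _ (by rw [hy, hy]; exact g.monotone (c.monotone hij))
    refine ⟨ωSup ⟨y, mono⟩, ?_⟩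
    rw [m.ωScottContinuous.map_ωSup, g.ωScottContinuous.map_ωSup]
    exact congrArg ωSup (Chain.ext (funext fun n => by exact hy n))
  have hrange : Set.range e ⊆ S := by
    rintro _ ⟨w, rfl⟩
    exact ⟨f w, hsq w⟩
  have hall : ∀ x : X, ∃ y : Y, m y = g x := by
    intro x
    have := he S hS hrange
    have : x ∈ S := this ▸ Set.mem_univ x
    exact this
  set h0 : X → Y := fun x => Classical.choose (hall x) with h0def
  have hh : ∀ x, m (h0 x) = g x := fun x => Classical.choose_spec (hall x)
  have hmono : Monotone h0 := fun a b hab =>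
    hm _ _ (by rw [hh, hh]; exact g.monotone hab)
  have hcont : ∀ c : Chain X, h0 (ωSup c) = ωSup (c.map ⟨h0, hmono⟩) := by
    intro c
    apply hinj
    rw [hh, m.ωScottContinuous.map_ωSup, g.ωScottContinuous.map_ωSup]
    exact congrArg ωSup (Chain.ext (funext fun n => by exact (hh (c n)).symm))
  refine ⟨⟨⟨h0, hmono⟩, hcont⟩, ⟨?_, ?_⟩, ?_⟩
  · intro w
    apply hinj
    show m (h0 (e w)) = m (f w)
    rw [hh]
    exact (hsq w).symm
  · intro x; exact hh x
  · rintro h' ⟨h'e, h'm⟩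
    ext x
    apply hinj
    show m (h' x) = m (h0 x)
    rw [hh, h'm]
end

section
/- (Existence of (dense, full) factorisations in ωCPO.) Let X and Y be ω-complete partial orders and f : X → Y an ωScott-continuous map. Let Z ⊆ Y be the intersection of all ω-chain-closed subsets of Y containing the image of f. Then: Z is ω-chain-closed (hence Z, with the inherited order, is an ωcpo whose ω-chain suprema agree with those of Y); the inclusion Z → Y is ωScott-continuous and full; the corestriction f' : X → Z of f is ωScott-continuous and dense; and f equals the inclusion composed with f'. -/
open OmegaCompletePartialOrder

/-- Existence of (dense, full) factorisations in ωCPO: the intersection `Z` of all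
ω-chain-closed subsets of `Y` containing the image of `f` is ω-chain-closed, hence an
ωcpo under the inherited order whose ω-chain suprema agree with those of `Y`; the
inclusion `Z → Y` is ωScott-continuous and full, the corestriction `f' : X → Z` of `f`
is ωScott-continuous and dense, and `f` equals the inclusion composed with `f'`. -/
theorem omegaCPO_dense_full_factorisation
    {X Y : Type*} [OmegaCompletePartialOrder X] [OmegaCompletePartialOrder Y]
    (f : X →𝒄 Y) (Z : Set Y)
    (hZ : Z = ⋂₀ {U : Set Y | ChainClosed U ∧ Set.range f ⊆ U}) :
    ∃ hZc : ChainClosed Z,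
      letI : OmegaCompletePartialOrder {y : Y // y ∈ Z} :=
        OmegaCompletePartialOrder.subtype (· ∈ Z)
          (fun c h => hZc c fun n => h (c n) ⟨n, rfl⟩)
      ∃ (f' : X →𝒄 {y : Y // y ∈ Z}) (incl : {y : Y // y ∈ Z} →𝒄 Y),
        (∀ z : {y : Y // y ∈ Z}, incl z = (z : Y)) ∧
        (∀ c : Chain {y : Y // y ∈ Z},
          ((ωSup c : {y : Y // y ∈ Z}) : Y) = ωSup (c.map (OrderHom.Subtype.val (· ∈ Z)))) ∧
        IsFullMap incl ∧
        IsDenseMap f' ∧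
        (∀ x : X, incl (f' x) = f x) := by
  have hZc : ChainClosed Z := by
    intro c hc
    rw [hZ]
    rintro U hU
    exact hU.1 c fun n => (hZ ▸ hc n) U hU
  have hrange : Set.range f ⊆ Z := by
    rw [hZ]
    exact fun y hy U hU => hU.2 hy
  refine ⟨hZc, ?_⟩
  letI : OmegaCompletePartialOrder {y : Y // y ∈ Z} :=
    OmegaCompletePartialOrder.subtype (· ∈ Z)
      (fun c h => hZc c fun n => h (c n) ⟨n, rfl⟩)
  refine ⟨⟨⟨fun x => ⟨f x, hrange ⟨x, rfl⟩⟩, fun a b h => f.monotone h⟩, ?_⟩,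
    ⟨OrderHom.Subtype.val (· ∈ Z), fun c => rfl⟩, fun z => rfl, fun c => rfl,
    fun x x' h => h, ?_, fun x => rfl⟩
  · intro c
    apply Subtype.ext
    exact f.map_ωSup' c
  · intro U hU hrangeU
    have key : ⋂₀ {U : Set Y | ChainClosed U ∧ Set.range f ⊆ U} ⊆ Subtype.val '' U := by
      refine Set.sInter_subset_of_mem ⟨?_, ?_⟩
      · intro c hc
        have hmem : ∀ n, c n ∈ Z := fun n => (hc n).choose_spec.2 ▸ (hc n).choose.2
        set c' : Chain {y : Y // y ∈ Z} :=
          ⟨fun n => ⟨c n, hmem n⟩, fun a b h => c.monotone h⟩ with hc'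
        have hc'U : ∀ n, c' n ∈ U := by
          intro n
          have h1 : (hc n).choose ∈ U := (hc n).choose_spec.1
          have h2 : (hc n).choose = c' n := Subtype.ext (hc n).choose_spec.2
          exact h2 ▸ h1
        refine ⟨ωSup c', hU c' hc'U, rfl⟩
      · rintro y ⟨x, rfl⟩
        exact ⟨⟨f x, hrange ⟨x, rfl⟩⟩, hrangeU ⟨x, rfl⟩, rfl⟩
    have hVZ : Z ⊆ Subtype.val '' U := fun z hz => key (by rwa [hZ] at hz)
    ext z
    simp only [Set.mem_univ, iff_true]
    obtain ⟨u, hu, huz⟩ := hVZ z.2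
    rwa [show u = z from Subtype.ext huz] at hu
end

section
/- (Accessibility of signature functors on Set.) Let ι be a type and let A, B : ι → Type u be families of types, and let F : Type u → Type u be the functor F(X) = Σ (i : ι), A i × (B i → X), acting on functions in the evident way. Let κ be a regular cardinal such that the cardinality of B i is strictly less than κ for every i : ι. Then F preserves colimits of all κ-filtered diagrams in Type u. -/
open CategoryTheory Limits

universe u

/-- The signature functor `X ↦ Σ i, A i × (B i → X)` of an effect signature. -/
def sigFunctor (ι : Type u) (A B : ι → Type u) : Type u ⥤ Type u where
  obj X := Σ i : ι, A i × (B i → X)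
  map f := TypeCat.ofHom fun p => ⟨p.1, p.2.1, ⇑f ∘ p.2.2⟩
  map_id X := rfl
  map_comp f g := rfl

/-- A category `J` is `κ`-filtered when every diagram in `J` of size `< κ` admits a
cocone. -/
def IsCardinalFiltered (J : Type u) [SmallCategory J] (κ : Cardinal.{u}) : Prop :=
  ∀ (K : Type u) (_ : SmallCategory K) (F : K ⥤ J),
    Cardinal.mk (Σ X Y : K, X ⟶ Y) < κ → Nonempty (Cocone F)

lemma cardSigmaDiscrete (T : Type u) :
    Cardinal.mk (Σ X Y : Discrete T, X ⟶ Y) ≤ Cardinal.mk T := by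
  refine Cardinal.mk_le_of_surjective (f := fun t : T => ⟨⟨t⟩, ⟨t⟩, 𝟙 _⟩) ?_
  rintro ⟨⟨x⟩, ⟨y⟩, ⟨⟨h⟩⟩⟩
  dsimp at h
  subst h
  exact ⟨x, rfl⟩

lemma cardSigmaWPF (T : Type u) :
    Cardinal.mk (Σ X Y : WalkingParallelFamily T, X ⟶ Y) ≤
      Cardinal.mk (Option (Option T)) := by
  refine Cardinal.mk_le_of_surjective
    (f := fun o : Option (Option T) => o.elim ⟨.zero, .zero, 𝟙 _⟩
      (fun o' => o'.elim ⟨.one, .one, 𝟙 _⟩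
        (fun t => ⟨.zero, .one, WalkingParallelFamily.Hom.line t⟩))) ?_
  rintro ⟨x, y, (_ | t)⟩
  · cases x
    · exact ⟨none, rfl⟩
    · exact ⟨some none, rfl⟩
  · exact ⟨some (some t), rfl⟩

/-- If `κ` is a regular cardinal bounding the arities `B i`, the signature functor
preserves colimits of `κ`-filtered diagrams in `Type u`. -/
theorem sigFunctor_preservesColimitsOfShape_of_isCardinalFiltered
    (ι : Type u) (A B : ι → Type u) (κ : Cardinal.{u}) (hκ : κ.IsRegular)
    (hB : ∀ i : ι, Cardinal.mk (B i) < κ)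
    (J : Type u) [SmallCategory J] (hJ : IsCardinalFiltered J κ) :
    PreservesColimitsOfShape J (sigFunctor ι A B) := by
  have hopt : ∀ T : Type u, Cardinal.mk T < κ → Cardinal.mk (Option T) < κ := by
    intro T hT
    rw [Cardinal.mk_option]
    exact Cardinal.add_lt_of_lt hκ.aleph0_le hT
      (lt_of_lt_of_le Cardinal.one_lt_aleph0 hκ.aleph0_le)
  -- cocones over small discrete families
  have hcocone : ∀ (T : Type u), Cardinal.mk T < κ → ∀ X : T → J,
      Nonempty (Cocone (Discrete.functor X)) := by
    intro T hT X
    exact hJ _ _ (Discrete.functor X) (lt_of_le_of_lt (cardSigmaDiscrete T) hT)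
  -- coequalizing small families of parallel morphisms
  have hpar : ∀ (T : Type u), Cardinal.mk T < κ → ∀ {X Y : J} (f : T → (X ⟶ Y)),
      ∃ (Z : J) (h : Y ⟶ Z) (l : X ⟶ Z), ∀ t, f t ≫ h = l := by
    intro T hT X Y f
    obtain ⟨t⟩ := hJ _ _ (parallelFamily f)
      (lt_of_le_of_lt (cardSigmaWPF T) (hopt _ (hopt _ hT)))
    refine ⟨t.pt, t.ι.app .one, t.ι.app .zero, fun b => ?_⟩
    simpa using t.w (WalkingParallelFamily.Hom.line b)
  have hbool : Cardinal.mk (ULift.{u} Bool) < κ :=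
    lt_of_lt_of_le (Cardinal.lt_aleph0_of_finite _) hκ.aleph0_le
  have : IsFilteredOrEmpty J := by
    constructor
    · intro X Y
      obtain ⟨t⟩ := hcocone _ hbool (fun b : ULift.{u} Bool => bif b.down then X else Y)
      exact ⟨t.pt, t.ι.app ⟨⟨true⟩⟩, t.ι.app ⟨⟨false⟩⟩, trivial⟩
    · intro X Y f g
      obtain ⟨Z, h, l, hl⟩ := hpar _ hbool (fun b : ULift.{u} Bool => bif b.down then f else g)
      exact ⟨Z, h, (hl ⟨true⟩).trans (hl ⟨false⟩).symm⟩
  constructor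
  intro D
  constructor
  intro c hc
  refine ⟨Types.FilteredColimit.isColimitOf (D ⋙ sigFunctor ι A B) _ ?_ ?_⟩
  · -- joint surjectivity
    rintro (⟨i, a, g⟩ : Σ i : ι, A i × (B i → c.pt))
    have hsurj : ∀ b : B i, ∃ j y, c.ι.app j y = g b := fun b =>
      Types.jointly_surjective D hc (g b)
    choose jb yb hb using hsurj
    obtain ⟨t⟩ := hcocone _ (hB i) jb
    refine ⟨t.pt, ⟨i, a, fun b => D.map (t.ι.app ⟨b⟩) (yb b)⟩, ?_⟩
    show (⟨i, a, g⟩ : Σ i : ι, A i × (B i → c.pt)) =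
      ⟨i, a, fun b => c.ι.app t.pt (D.map (t.ι.app ⟨b⟩) (yb b))⟩
    have : g = fun b => c.ι.app t.pt (D.map (t.ι.app ⟨b⟩) (yb b)) := by
      funext b
      rw [← hb b]
      exact (congrArg (fun f => f (yb b)) (c.w (t.ι.app ⟨b⟩))).symm
    rw [← this]
  · -- joint injectivity
    rintro j j' (⟨i, a, g⟩ : Σ i : ι, A i × (B i → D.obj j)) (⟨i', a', g'⟩ : Σ i : ι, A i × (B i → D.obj j')) h
    have h' : (⟨i, a, fun b => c.ι.app j (g b)⟩ : Σ i : ι, A i × (B i → c.pt)) =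
        ⟨i', a', fun b => c.ι.app j' (g' b)⟩ := h
    obtain rfl : i = i' := congrArg Sigma.fst h'
    have h2 := sigma_mk_injective h'
    rw [Prod.mk.injEq] at h2
    obtain ⟨rfl, hg⟩ := h2
    have key : ∀ b : B i, ∃ (k : J) (f : j ⟶ k) (f' : j' ⟶ k),
        D.map f (g b) = D.map f' (g' b) := by
      intro b
      exact (Types.FilteredColimit.isColimit_eq_iff D hc).mp (congr_fun hg b)
    choose kb fb f'b hk using key
    -- a common upper bound of j, j' and all the kb
    obtain ⟨t⟩ := hcocone _ (hopt _ (hopt _ (hB i)))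
      (fun o : Option (Option (B i)) => o.elim j (fun o' => o'.elim j' kb))
    set m := t.pt
    have v0 : j ⟶ m := t.ι.app ⟨none⟩
    have v1 : j' ⟶ m := t.ι.app ⟨some none⟩
    have u : ∀ b : B i, kb b ⟶ m := fun b => t.ι.app ⟨some (some b)⟩
    -- coequalize the family of maps j ⟶ m
    obtain ⟨n, w, p, hp⟩ := hpar _ (hopt _ (hB i))
      (fun o : Option (B i) => o.elim v0 (fun b => fb b ≫ u b))
    -- coequalize the family of maps j' ⟶ n
    obtain ⟨n', z, q, hq⟩ := hpar _ (hopt _ (hB i))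
      (fun o : Option (B i) => o.elim (v1 ≫ w) (fun b => (f'b b ≫ u b) ≫ w))
    refine ⟨n', p ≫ z, q, ?_⟩
    show (⟨i, a, fun b => D.map (p ≫ z) (g b)⟩ : Σ i : ι, A i × (B i → D.obj n')) =
      ⟨i, a, fun b => D.map q (g' b)⟩
    have : (fun b => D.map (p ≫ z) (g b)) = fun b : B i => D.map q (g' b) := by
      funext b
      have hp' : (fb b ≫ u b) ≫ w = p := hp (some b)
      have hq' : ((f'b b ≫ u b) ≫ w) ≫ z = q := hq (some b)
      calc D.map (p ≫ z) (g b)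
          = D.map (((fb b ≫ u b) ≫ w) ≫ z) (g b) := by rw [hp']
        _ = D.map ((u b ≫ w) ≫ z) (D.map (fb b) (g b)) := by
            rw [← FunctorToTypes.map_comp_apply]; congr 1; simp
        _ = D.map ((u b ≫ w) ≫ z) (D.map (f'b b) (g' b)) := by rw [hk b]
        _ = D.map (((f'b b ≫ u b) ≫ w) ≫ z) (g' b) := by
            rw [← FunctorToTypes.map_comp_apply]; congr 1; simp
        _ = D.map q (g' b) := by rw [hq']
    rw [this]
end

section
/- (Transfer of algebraic structure to the factorised monad.) Let (E, M) be an orthogonal factorisation system on a category C and let F : C → C be a functor such that E is closed under F. Let S and T be monads on C with E closed under S, let m : S → T be a monad morphism, and suppose m factors as m = m' ∘ e where e : S → S' and m' : S' → T are monad morphisms with every component of e in E and every component of m' in M. Let β : F∘S → S and β' : F∘T → T be natural transformations (componentwise β_X : F(S X) → S X and β'_X : F(T X) → T X) satisfying the compatibility m_X ∘ β_X = β'_X ∘ F(m_X) for every object X. Then there exists a unique natural transformation β'' : F∘S' → S' such that e_X ∘ β_X = β''_X ∘ F(e_X) and m'_X ∘ β''_X = β'_X ∘ F(m'_X) for every object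 X. -/
open CategoryTheory

universe v u

/-- Transfer of algebraic structure (an `F`-algebra structure on the monads, i.e.
interpretations of algebraic operations) to the middle monad of the factorisation of a
monad morphism. -/
theorem transfer_algebraic_structure {C : Type u} [Category.{v} C]
    (E M : MorphismProperty C) (hOFS : IsOFS E M)
    (F : C ⥤ C) (hF : ∀ {X Y : C} (f : X ⟶ Y), E f → E (F.map f))
    (S T : Monad C) (hS : ∀ {X Y : C} (f : X ⟶ Y), E f → E (S.map f))
    (m : S ⟶ T)
    (S' : Monad C) (e : S ⟶ S') (m' : S' ⟶ T)
    (hfac : e ≫ m' = m) (he : ∀ X : C, E (e.app X)) (hm' : ∀ X : C, M (m'.app X))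
    (β : S.toFunctor ⋙ F ⟶ S.toFunctor) (β' : T.toFunctor ⋙ F ⟶ T.toFunctor)
    (hcompat : ∀ X : C, β.app X ≫ m.app X = F.map (m.app X) ≫ β'.app X) :
    ∃! β'' : S'.toFunctor ⋙ F ⟶ S'.toFunctor,
      (∀ X : C, β.app X ≫ e.app X = F.map (e.app X) ≫ β''.app X) ∧
      (∀ X : C, β''.app X ≫ m'.app X = F.map (m'.app X) ≫ β'.app X) := by
  have hm : ∀ X : C, m.app X = e.app X ≫ m'.app X := by
    intro X; rw [← hfac]; rfl
  have key : ∀ X : C, ∃! h : F.obj (S'.obj X) ⟶ S'.obj X,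
      F.map (e.app X) ≫ h = β.app X ≫ e.app X ∧
      h ≫ m'.app X = F.map (m'.app X) ≫ β'.app X := by
    intro X
    apply hOFS.fillin (F.map (e.app X)) (m'.app X) (β.app X ≫ e.app X)
      (F.map (m'.app X) ≫ β'.app X) (hF _ (he X)) (hm' X)
    have h1 := hcompat X
    rw [hm X] at h1
    rw [Category.assoc, h1, F.map_comp, Category.assoc]
  choose b hb hbu using key
  -- naturality of b
  have hnat : ∀ {X Y : C} (f : X ⟶ Y),
      F.map (S'.map f) ≫ b Y = b X ≫ S'.map f := by
    intro X Y f
    have enat : S.map f ≫ e.app Y = e.app X ≫ S'.map f := (e.toNatTrans).naturality f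
    have m'nat : S'.map f ≫ m'.app Y = m'.app X ≫ T.map f := (m'.toNatTrans).naturality f
    have βnat : F.map (S.map f) ≫ β.app Y = β.app X ≫ S.map f := β.naturality f
    have β'nat : F.map (T.map f) ≫ β'.app Y = β'.app X ≫ T.map f := β'.naturality f
    have c1 : F.map (e.app X) ≫ F.map (S'.map f) ≫ b Y
        = β.app X ≫ e.app X ≫ S'.map f := by
      rw [← F.map_comp_assoc, ← enat, F.map_comp_assoc, (hb Y).1, reassoc_of% βnat, enat]
    have c2 : (F.map (S'.map f) ≫ b Y) ≫ m'.app Y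
        = F.map (m'.app X) ≫ β'.app X ≫ T.map f := by
      rw [Category.assoc, (hb Y).2, ← F.map_comp_assoc, m'nat, F.map_comp_assoc, β'nat]
    have sq : (β.app X ≫ e.app X ≫ S'.map f) ≫ m'.app Y
        = F.map (e.app X) ≫ F.map (m'.app X) ≫ β'.app X ≫ T.map f := by
      rw [← c1, Category.assoc, c2]
    obtain ⟨h, _, hu⟩ := hOFS.fillin (F.map (e.app X)) (m'.app Y)
      (β.app X ≫ e.app X ≫ S'.map f) (F.map (m'.app X) ≫ β'.app X ≫ T.map f)
      (hF _ (he X)) (hm' Y) sq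
    have e1 : F.map (S'.map f) ≫ b Y = h := hu _ ⟨c1, c2⟩
    have e2 : b X ≫ S'.map f = h := by
      apply hu
      constructor
      · rw [← Category.assoc, (hb X).1, Category.assoc]
      · rw [Category.assoc, m'nat, reassoc_of% (hb X).2]
    rw [e1, e2]
  refine ⟨{ app := b, naturality := fun X Y f => hnat f }, ⟨fun X => ((hb X).1).symm,
    fun X => (hb X).2⟩, ?_⟩
  intro γ ⟨hγ1, hγ2⟩
  ext X
  exact hbu X (γ.app X) ⟨(hγ1 X).symm, hγ2 X⟩
end
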